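/- For every integer t ≥ 1, the polynomial f(X) = X³ − 27tX − 1 is irreducible over ℚ, and its discriminant equals 27(2916t³ − 1), which is not a perfect square. -/

import Mathlib

open Polynomial

/-- For every integer `t ≥ 1`, the polynomial `f(X) = X³ − 27tX − 1` is
irreducible over `ℚ`, and its discriminant `−4(−27t)³ − 27(−1)²` equals
`27(2916t³ − 1)`, which is not a perfect square. -/
theorem stmt_11 (t : ℤ) (ht : 1 ≤ t) :
    Irreducible
      ((X ^ 3 - C (27 * t) * X - C 1 : ℤ[X]).map (Int.castRingHom ℚ)) ∧
    -4 * (-(27 * t)) ^ 3 - 27 * ((-1 : ℤ)) ^ 2 = 27 * (2916 * t ^ 3 - 1) ∧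
    ¬ IsSquare (27 * (2916 * t ^ 3 - 1)) := by
  refine ⟨?_, by ring, ?_⟩
  · set f : ℤ[X] := X ^ 3 - C (27 * t) * X - C 1 with hf
    have hdeg : f.natDegree = 3 := by
      unfold f
      compute_degree!
    have hmonic : f.Monic := by
      unfold f
      monicity!
    have hirr : Irreducible f := by
      rw [hmonic.irreducible_iff_roots_eq_zero_of_degree_le_three (by omega) (by omega)]
      rw [Multiset.eq_zero_iff_forall_notMem]
      intro z hz
      rw [mem_roots hmonic.ne_zero, IsRoot, hf] at hz
      simp only [eval_sub, eval_mul, eval_pow, eval_X, eval_C] at hz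
      have h1 : z * (z ^ 2 - 27 * t) = 1 := by ring_nf; linarith [hz]
      have hu : z = 1 ∨ z = -1 := Int.isUnit_iff.mp (IsUnit.of_mul_eq_one _ h1)
      rcases hu with rfl | rfl <;> nlinarith [hz]
    exact (IsPrimitive.Int.irreducible_iff_irreducible_map_cast hmonic.isPrimitive).mp hirr
  · rintro ⟨r, hr⟩
    have h81 : ((27 * (2916 * t ^ 3 - 1) : ℤ) : ZMod 81) = ((r : ZMod 81) * (r : ZMod 81)) := by
      exact_mod_cast congrArg (Int.cast : ℤ → ZMod 81) hr
    push_cast at h81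
    have h2916 : (2916 : ZMod 81) = 0 := by decide
    rw [h2916] at h81
    have : IsSquare ((27 : ZMod 81) * (0 * (t:ZMod 81) ^ 3 - 1)) := ⟨_, h81⟩
    simp only [zero_mul, zero_sub, mul_neg, mul_one] at this
    revert this
    decide
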